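/- Let N ≥ 1 be an integer, 0 < p < 1, and let μ̄, Δ⁻, Δ⁺, I, α⁺, α⁻ be as defined, with 0 ≤ μ̄ − Δ⁻ and μ̄ + Δ⁺ ≤ N. Let (X_t, Y_t)_{t≥0} be a pair of I-valued stochastic processes on a probability space with X_0 = μ̄ + Δ⁺ and Y_0 = μ̄ − Δ⁻ almost surely, such that for every t ≥ 0, on the event {X_t ≠ Y_t}, conditionally on the σ-algebra generated by the trajectory up to time t, the pair moves as follows: (X_{t+1}, Y_{t+1}) = (X_t, Y_t + 1) with probability α⁺(Y_t)/4; (X_t, Y_t − 1) with probability α⁻(Y_t)/4; (X_t + 1, Y_t) with probability α⁺(X_t)/4; (X_t − 1, Y_t) with probability α⁻(X_t)/4; and (X_t, Y_t) with the remaining probability (1 − α⁺(Y_t))/4 + (1 − α⁻(Y_t))/4 + (1 − α⁺(X_t))/4 + (1 − α⁻(X_t))/4. Let T = min{t : X_t = Y_t} be the coupling time. Then E[T] ≤ 2(Δ⁺ + Δ⁻ + 1)². -/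

import Mathlib

open MeasureTheory ProbabilityTheory
open scoped ENNReal

/-- The Metropolis acceptance function `α⁺`. -/
noncomputable def alphaPlus (N : ℕ) (p : ℝ) (μbar Δp : ℕ) (k : ℕ) : ℝ :=
  if k < μbar then 1
  else if k < μbar + Δp then ((N : ℝ) - k) / ((k : ℝ) + 1) * (p / (1 - p))
  else 0

/-- The Metropolis acceptance function `α⁻`. -/
noncomputable def alphaMinus (N : ℕ) (p : ℝ) (μbar Δm : ℕ) (k : ℕ) : ℝ :=
  if μbar < k then 1
  else if μbar - Δm < k then (k : ℝ) / ((N : ℝ) - k + 1) * ((1 - p) / p)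
  else 0

/-- One-step transition kernel of the coupling `(X_t, Y_t)` while `X_t ≠ Y_t`: from
`(a, b)` the pair moves to `(a, b+1)` w.p. `α⁺(b)/4`, to `(a, b-1)` w.p. `α⁻(b)/4`, to
`(a+1, b)` w.p. `α⁺(a)/4`, to `(a-1, b)` w.p. `α⁻(a)/4`, and stays at `(a, b)` with the
remaining probability `(1-α⁺(b))/4 + (1-α⁻(b))/4 + (1-α⁺(a))/4 + (1-α⁻(a))/4`
(probabilities of coinciding outcomes add up). -/
noncomputable def coupleKernel (N : ℕ) (p : ℝ) (μbar Δm Δp : ℕ) (a b a' b' : ℕ) : ℝ :=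
  (if a' = a ∧ b' = b + 1 then alphaPlus N p μbar Δp b / 4 else 0) +
  (if a' = a ∧ b' = b - 1 then alphaMinus N p μbar Δm b / 4 else 0) +
  (if a' = a + 1 ∧ b' = b then alphaPlus N p μbar Δp a / 4 else 0) +
  (if a' = a - 1 ∧ b' = b then alphaMinus N p μbar Δm a / 4 else 0) +
  (if a' = a ∧ b' = b then
      (1 - alphaPlus N p μbar Δp b) / 4 + (1 - alphaMinus N p μbar Δm b) / 4 +
        (1 - alphaPlus N p μbar Δp a) / 4 + (1 - alphaMinus N p μbar Δm a) / 4
    else 0)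

section Alpha
variable {N μbar Δm Δp : ℕ} {p : ℝ}

lemma aplus_nonneg (hp0 : 0 < p) (hp1 : p < 1) (hΔp : μbar + Δp ≤ N) (k : ℕ) :
    0 ≤ alphaPlus N p μbar Δp k := by
  unfold alphaPlus
  split_ifs with h1 h2
  · exact zero_le_one
  · have hkN : (k : ℝ) ≤ N := by exact_mod_cast Nat.le_of_lt (lt_of_lt_of_le h2 hΔp)
    have h3 : (0:ℝ) < 1 - p := by linarith
    have h4 : (0:ℝ) ≤ (N:ℝ) - k := by linarith
    positivity
  · exact le_refl 0

lemma aplus_le_one (hp0 : 0 < p) (hp1 : p < 1) (hΔp : μbar + Δp ≤ N)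
    (hA : (N : ℝ) * p - 1 + p ≤ μbar) (k : ℕ) : alphaPlus N p μbar Δp k ≤ 1 := by
  unfold alphaPlus
  split_ifs with h1 h2
  · exact le_refl 1
  · have hμk : (μbar : ℝ) ≤ k := by exact_mod_cast Nat.le_of_not_lt h1
    have h3 : (0:ℝ) < 1 - p := by linarith
    have h4 : (0:ℝ) < ((k:ℝ) + 1) * (1 - p) := by positivity
    rw [div_mul_div_comm, div_le_one h4]
    nlinarith
  · exact zero_le_one

lemma aminus_nonneg (hp0 : 0 < p) (hp1 : p < 1) (hΔp : μbar + Δp ≤ N) (k : ℕ) :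
    0 ≤ alphaMinus N p μbar Δm k := by
  unfold alphaMinus
  split_ifs with h1 h2
  · exact zero_le_one
  · have hkN : (k : ℝ) ≤ N := by
      have : k ≤ N := le_trans (Nat.le_of_not_lt h1) (by omega)
      exact_mod_cast this
    have h3 : (0:ℝ) < 1 - p := by linarith
    have h4 : (0:ℝ) < (N:ℝ) - k + 1 := by linarith
    positivity
  · exact le_refl 0

lemma aminus_le_one (hp0 : 0 < p) (hp1 : p < 1) (hΔp : μbar + Δp ≤ N)
    (hB : (μbar : ℝ) ≤ ((N : ℝ) + 1) * p) (k : ℕ) : alphaMinus N p μbar Δm k ≤ 1 := by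
  unfold alphaMinus
  split_ifs with h1 h2
  · exact le_refl 1
  · have hkμ : (k : ℝ) ≤ μbar := by exact_mod_cast Nat.le_of_not_lt h1
    have hkN : (k : ℝ) ≤ N := by
      have : k ≤ N := le_trans (Nat.le_of_not_lt h1) (by omega)
      exact_mod_cast this
    have h3 : (0:ℝ) < 1 - p := by linarith
    have h4' : (0:ℝ) < (N:ℝ) - k + 1 := by linarith
    have h4 : (0:ℝ) < ((N:ℝ) - k + 1) * p := mul_pos h4' hp0
    rw [div_mul_div_comm, div_le_one h4]
    nlinarith
  · exact zero_le_one

lemma aminus_eq_ratio {k : ℕ} (h1 : ¬ μbar < k) (h2 : μbar - Δm < k) :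
    alphaMinus N p μbar Δm k = (k : ℝ) / ((N : ℝ) - k + 1) * ((1 - p) / p) := by
  unfold alphaMinus; rw [if_neg h1, if_pos h2]

lemma aminus_eq_zero {k : ℕ} (h1 : ¬ μbar < k) (h2 : ¬ μbar - Δm < k) :
    alphaMinus N p μbar Δm k = 0 := by
  unfold alphaMinus; rw [if_neg h1, if_neg h2]

lemma aplus_eq_ratio {k : ℕ} (h1 : ¬ k < μbar) (h2 : k < μbar + Δp) :
    alphaPlus N p μbar Δp k = ((N : ℝ) - k) / ((k : ℝ) + 1) * (p / (1 - p)) := by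
  unfold alphaPlus; rw [if_neg h1, if_pos h2]

/-- `alphaMinus` is monotone. -/
lemma aminus_mono (hp0 : 0 < p) (hp1 : p < 1) (hΔp : μbar + Δp ≤ N)
    (hB : (μbar : ℝ) ≤ ((N : ℝ) + 1) * p) {b a : ℕ} (hba : b < a) :
    alphaMinus N p μbar Δm b ≤ alphaMinus N p μbar Δm a := by
  by_cases ha1 : μbar < a
  · have h : alphaMinus N p μbar Δm a = 1 := by unfold alphaMinus; rw [if_pos ha1]
    rw [h]; exact aminus_le_one hp0 hp1 hΔp hB b
  · have hb1 : ¬ μbar < b := by omega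
    by_cases hb2 : μbar - Δm < b
    · have ha2 : μbar - Δm < a := by omega
      rw [aminus_eq_ratio hb1 hb2, aminus_eq_ratio ha1 ha2]
      have hbN : (b:ℝ) ≤ N := by
        have h : b ≤ N := by omega
        exact_mod_cast h
      have haN : (a:ℝ) ≤ N := by
        have h : a ≤ N := by omega
        exact_mod_cast h
      have hbaR : (b:ℝ) < a := by exact_mod_cast hba
      have h3 : (0:ℝ) < 1 - p := by linarith
      have hdb : (0:ℝ) < (N:ℝ) - b + 1 := by linarith
      have hda : (0:ℝ) < (N:ℝ) - a + 1 := by linarith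
      have key : (b:ℝ) / ((N:ℝ) - b + 1) ≤ (a:ℝ) / ((N:ℝ) - a + 1) := by
        rw [div_le_div_iff₀ hdb hda]
        have hb0 : (0:ℝ) ≤ b := by positivity
        nlinarith
      have hfrac : (0:ℝ) ≤ (1 - p) / p := by positivity
      exact mul_le_mul_of_nonneg_right key hfrac
    · rw [aminus_eq_zero hb1 hb2]
      exact aminus_nonneg hp0 hp1 hΔp a

/-- `alphaPlus` is antitone. -/
lemma aplus_anti (hp0 : 0 < p) (hp1 : p < 1) (hΔp : μbar + Δp ≤ N)
    (hA : (N : ℝ) * p - 1 + p ≤ μbar) {b a : ℕ} (hba : b < a) :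
    alphaPlus N p μbar Δp a ≤ alphaPlus N p μbar Δp b := by
  by_cases hb1 : b < μbar
  · have h : alphaPlus N p μbar Δp b = 1 := by unfold alphaPlus; rw [if_pos hb1]
    rw [h]; exact aplus_le_one hp0 hp1 hΔp hA a
  · have ha1 : ¬ a < μbar := by omega
    by_cases ha2 : a < μbar + Δp
    · have hb2 : b < μbar + Δp := by omega
      rw [aplus_eq_ratio ha1 ha2, aplus_eq_ratio hb1 hb2]
      have haN : (a:ℝ) ≤ N := by
        have h : a ≤ N := by omega
        exact_mod_cast h
      have hbaR : (b:ℝ) < a := by exact_mod_cast hba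
      have h3 : (0:ℝ) < 1 - p := by linarith
      have key : ((N:ℝ) - a) / ((a:ℝ) + 1) ≤ ((N:ℝ) - b) / ((b:ℝ) + 1) := by
        have hda : (0:ℝ) < (a:ℝ) + 1 := by positivity
        have hdb : (0:ℝ) < (b:ℝ) + 1 := by positivity
        rw [div_le_div_iff₀ hda hdb]
        nlinarith
      have hfrac : (0:ℝ) ≤ p / (1 - p) := by positivity
      exact mul_le_mul_of_nonneg_right key hfrac
    · have h : alphaPlus N p μbar Δp a = 0 := by
        unfold alphaPlus; rw [if_neg ha1, if_neg ha2]
      rw [h]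
      exact aplus_nonneg hp0 hp1 hΔp b

lemma alpha_sum_ge_one (hp0 : 0 < p) (hp1 : p < 1) (hΔp : μbar + Δp ≤ N) {b a : ℕ}
    (hba : b < a) : 1 ≤ alphaPlus N p μbar Δp b + alphaMinus N p μbar Δm a := by
  by_cases hc : μbar < a
  · have h1 : alphaMinus N p μbar Δm a = 1 := by unfold alphaMinus; rw [if_pos hc]
    have h2 := aplus_nonneg hp0 hp1 hΔp (μbar := μbar) b
    linarith
  · have hbμ : b < μbar := by omega
    have h1 : alphaPlus N p μbar Δp b = 1 := by unfold alphaPlus; rw [if_pos hbμ]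
    have h2 := aminus_nonneg hp0 hp1 hΔp (μbar := μbar) (Δm := Δm) a
    linarith

end Alpha
open MeasureTheory
/-- Symmetric distance on ℕ. -/
def nd (a b : ℕ) : ℕ := (a - b) + (b - a)

/-- The potential function `h(d) = 2d(2Δ+1-d)`. -/
noncomputable def Hq (Δ d : ℕ) : ℝ := 2 * (d : ℝ) * (2 * (Δ : ℝ) + 1 - (d : ℝ))

lemma Hq_nonneg {Δ d : ℕ} (h : d ≤ 2 * Δ + 1) : 0 ≤ Hq Δ d := by
  unfold Hq
  have h1 : (d:ℝ) ≤ 2 * (Δ:ℝ) + 1 := by exact_mod_cast h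
  have h2 : (0:ℝ) ≤ (d:ℝ) := by positivity
  nlinarith

lemma Hq_ge_one {Δ d : ℕ} (h1 : 1 ≤ d) (h2 : d ≤ Δ) : 1 ≤ Hq Δ d := by
  unfold Hq
  have h1' : (1:ℝ) ≤ (d:ℝ) := by exact_mod_cast h1
  have h2' : (d:ℝ) ≤ (Δ:ℝ) := by exact_mod_cast h2
  nlinarith

/-- The abstract real drift inequality. -/
lemma drift_real (A B C D d Δ v : ℝ) (hA : 0 ≤ A) (hB : 0 ≤ B) (hC : 0 ≤ C) (hD : 0 ≤ D)
    (h1 : 1 ≤ A + D) (h2 : B + C ≤ A + D) (hd1 : 1 ≤ d) (hdΔ : d ≤ Δ)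
    (hv : B * v = B * (2 * (d+1) * (2*Δ+1-(d+1)))) :
    A * (2 * (d-1) * (2*Δ+1-(d-1))) + B * v + C * (2 * (d+1) * (2*Δ+1-(d+1))) +
      D * (2 * (d-1) * (2*Δ+1-(d-1))) +
      ((1-A) + (1-B) + (1-C) + (1-D)) * (2 * d * (2*Δ+1-d)) ≤
      4 * (2 * d * (2*Δ+1-d)) - 4 := by
  nlinarith [mul_nonneg (by linarith : (0:ℝ) ≤ A + D - (B + C)) (by linarith : (0:ℝ) ≤ Δ - d), hv]

section Drift
variable {N μbar Δm Δp : ℕ} {p : ℝ}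

lemma kernel_drift (hp0 : 0 < p) (hp1 : p < 1) (hΔm : Δm ≤ μbar) (hΔp : μbar + Δp ≤ N)
    (hA : (N : ℝ) * p - 1 + p ≤ μbar) (hB : (μbar : ℝ) ≤ ((N : ℝ) + 1) * p)
    (x y : ℕ) (hx1 : μbar - Δm ≤ x) (hx2 : x ≤ μbar + Δp)
    (hy1 : μbar - Δm ≤ y) (hy2 : y ≤ μbar + Δp) (hxy : x ≠ y) :
    alphaPlus N p μbar Δp y * Hq (Δp + Δm) (nd x (y+1)) +
      alphaMinus N p μbar Δm y * Hq (Δp + Δm) (nd x (y-1)) +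
      alphaPlus N p μbar Δp x * Hq (Δp + Δm) (nd (x+1) y) +
      alphaMinus N p μbar Δm x * Hq (Δp + Δm) (nd (x-1) y) +
      ((1 - alphaPlus N p μbar Δp y) + (1 - alphaMinus N p μbar Δm y) +
        (1 - alphaPlus N p μbar Δp x) + (1 - alphaMinus N p μbar Δm x)) *
        Hq (Δp + Δm) (nd x y) ≤
    4 * Hq (Δp + Δm) (nd x y) - 4 := by
  set Δn := Δp + Δm with hΔn
  have hd1 : 1 ≤ nd x y := by simp only [nd]; omega
  have hdΔ : nd x y ≤ Δn := by simp only [nd, hΔn]; omega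
  have hd1R : (1:ℝ) ≤ (nd x y : ℝ) := by exact_mod_cast hd1
  have hdΔR : ((nd x y : ℕ) : ℝ) ≤ (Δn : ℝ) := by exact_mod_cast hdΔ
  have hE0 : Hq Δn (nd x y) = 2 * ((nd x y : ℕ) : ℝ) * (2 * (Δn:ℝ) + 1 - ((nd x y : ℕ):ℝ)) := rfl
  set dR := ((nd x y : ℕ) : ℝ) with hdR
  have castm : ∀ m : ℕ, m = nd x y - 1 → ((m : ℕ) : ℝ) = dR - 1 := by
    intro m hm
    rw [hm, hdR]
    rw [Nat.cast_sub hd1]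
    norm_num
  have castp : ∀ m : ℕ, m = nd x y + 1 → ((m : ℕ) : ℝ) = dR + 1 := by
    intro m hm; rw [hm]; push_cast; ring
  rcases lt_or_gt_of_ne hxy with hlt | hgt
  · -- x < y : b := x, a := y
    have E1 : Hq Δn (nd x (y+1)) = 2 * (dR+1) * (2 * (Δn:ℝ) + 1 - (dR+1)) := by
      unfold Hq; rw [castp (nd x (y+1)) (by simp only [nd]; omega)]
    have E2 : Hq Δn (nd x (y-1)) = 2 * (dR-1) * (2 * (Δn:ℝ) + 1 - (dR-1)) := by
      unfold Hq; rw [castm (nd x (y-1)) (by simp only [nd]; omega)]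
    have E3 : Hq Δn (nd (x+1) y) = 2 * (dR-1) * (2 * (Δn:ℝ) + 1 - (dR-1)) := by
      unfold Hq; rw [castm (nd (x+1) y) (by simp only [nd]; omega)]
    have hv : alphaMinus N p μbar Δm x * Hq Δn (nd (x-1) y) =
        alphaMinus N p μbar Δm x * (2 * (dR+1) * (2 * (Δn:ℝ) + 1 - (dR+1))) := by
      by_cases hx0 : x = 0
      · have hz : alphaMinus N p μbar Δm x = 0 := by
          subst hx0
          exact aminus_eq_zero (by omega) (by omega)
        rw [hz]; ring
      · have E4 : Hq Δn (nd (x-1) y) = 2 * (dR+1) * (2 * (Δn:ℝ) + 1 - (dR+1)) := by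
          unfold Hq; rw [castp (nd (x-1) y) (by simp only [nd]; omega)]
        rw [E4]
    have h1 := alpha_sum_ge_one (Δm := Δm) hp0 hp1 hΔp hlt
    have h2a := aplus_anti hp0 hp1 hΔp hA hlt
    have h2b := aminus_mono (Δm := Δm) hp0 hp1 hΔp hB hlt
    have key := drift_real (alphaPlus N p μbar Δp x) (alphaMinus N p μbar Δm x)
      (alphaPlus N p μbar Δp y) (alphaMinus N p μbar Δm y) dR (Δn:ℝ)
      (Hq Δn (nd (x-1) y))
      (aplus_nonneg hp0 hp1 hΔp x) (aminus_nonneg hp0 hp1 hΔp x)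
      (aplus_nonneg hp0 hp1 hΔp y) (aminus_nonneg hp0 hp1 hΔp y)
      h1 (by linarith) hd1R hdΔR hv
    rw [E1, E2, E3, hE0]
    linarith [key]
  · -- y < x : b := y, a := x
    have E1 : Hq Δn (nd x (y+1)) = 2 * (dR-1) * (2 * (Δn:ℝ) + 1 - (dR-1)) := by
      unfold Hq; rw [castm (nd x (y+1)) (by simp only [nd]; omega)]
    have E3 : Hq Δn (nd (x+1) y) = 2 * (dR+1) * (2 * (Δn:ℝ) + 1 - (dR+1)) := by
      unfold Hq; rw [castp (nd (x+1) y) (by simp only [nd]; omega)]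
    have E4 : Hq Δn (nd (x-1) y) = 2 * (dR-1) * (2 * (Δn:ℝ) + 1 - (dR-1)) := by
      unfold Hq; rw [castm (nd (x-1) y) (by simp only [nd]; omega)]
    have hv : alphaMinus N p μbar Δm y * Hq Δn (nd x (y-1)) =
        alphaMinus N p μbar Δm y * (2 * (dR+1) * (2 * (Δn:ℝ) + 1 - (dR+1))) := by
      by_cases hy0 : y = 0
      · have hz : alphaMinus N p μbar Δm y = 0 := by
          subst hy0
          exact aminus_eq_zero (by omega) (by omega)
        rw [hz]; ring
      · have E2 : Hq Δn (nd x (y-1)) = 2 * (dR+1) * (2 * (Δn:ℝ) + 1 - (dR+1)) := by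
          unfold Hq; rw [castp (nd x (y-1)) (by simp only [nd]; omega)]
        rw [E2]
    have h1 := alpha_sum_ge_one (Δm := Δm) hp0 hp1 hΔp hgt
    have h2a := aplus_anti hp0 hp1 hΔp hA hgt
    have h2b := aminus_mono (Δm := Δm) hp0 hp1 hΔp hB hgt
    have key := drift_real (alphaPlus N p μbar Δp y) (alphaMinus N p μbar Δm y)
      (alphaPlus N p μbar Δp x) (alphaMinus N p μbar Δm x) dR (Δn:ℝ)
      (Hq Δn (nd x (y-1)))
      (aplus_nonneg hp0 hp1 hΔp y) (aminus_nonneg hp0 hp1 hΔp y)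
      (aplus_nonneg hp0 hp1 hΔp x) (aminus_nonneg hp0 hp1 hΔp x)
      h1 (by linarith) hd1R hdΔR hv
    rw [E1, E3, E4, hE0]
    linarith [key]

end Drift
open MeasureTheory ProbabilityTheory
open scoped ENNReal

/-- Expand a lintegral of a function of a pair of ℕ-valued random variables as a sum. -/
lemma lintegral_pair_eq_tsum {Ω : Type*} [MeasurableSpace Ω] (ν : Measure Ω)
    (Z W : Ω → ℕ) (hZ : Measurable Z) (hW : Measurable W) (g : ℕ × ℕ → ℝ≥0∞) :
    ∫⁻ ω, g (Z ω, W ω) ∂ν = ∑' q : ℕ × ℕ, g q * ν {ω | Z ω = q.1 ∧ W ω = q.2} := by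
  have hmeas : ∀ q : ℕ × ℕ, MeasurableSet {ω | Z ω = q.1 ∧ W ω = q.2} := by
    intro q
    exact (hZ (measurableSet_singleton q.1)).inter (hW (measurableSet_singleton q.2))
  have hpt : ∀ ω, g (Z ω, W ω) =
      ∑' q : ℕ × ℕ, Set.indicator {ω | Z ω = q.1 ∧ W ω = q.2} (fun _ => g q) ω := by
    intro ω
    rw [tsum_eq_single (Z ω, W ω)]
    · simp [Set.indicator_of_mem, Set.mem_setOf_eq]
    · intro q hq
      rw [Set.indicator_of_notMem]
      intro hmem
      exact hq (Prod.ext hmem.1.symm hmem.2.symm)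
  calc ∫⁻ ω, g (Z ω, W ω) ∂ν
      = ∫⁻ ω, ∑' q : ℕ × ℕ, Set.indicator {ω | Z ω = q.1 ∧ W ω = q.2} (fun _ => g q) ω ∂ν := by
        exact lintegral_congr hpt
    _ = ∑' q : ℕ × ℕ, ∫⁻ ω, Set.indicator {ω | Z ω = q.1 ∧ W ω = q.2} (fun _ => g q) ω ∂ν := by
        exact lintegral_tsum fun q => (measurable_const.indicator (hmeas q)).aemeasurable
    _ = ∑' q : ℕ × ℕ, g q * ν {ω | Z ω = q.1 ∧ W ω = q.2} := by
        refine tsum_congr fun q => ?_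
        rw [lintegral_indicator_const (hmeas q)]


lemma ite_nonneg' {c : Prop} [Decidable c] {r : ℝ} (hr : 0 ≤ r) : 0 ≤ if c then r else 0 := by
  split <;> simp [hr]

section KernelBound
variable {N μbar Δm Δp : ℕ} {p : ℝ}

lemma tsum_kernel_bound (hp0 : 0 < p) (hp1 : p < 1) (hΔm : Δm ≤ μbar) (hΔp : μbar + Δp ≤ N)
    (hA : (N : ℝ) * p - 1 + p ≤ μbar) (hB : (μbar : ℝ) ≤ ((N : ℝ) + 1) * p)
    (x y : ℕ) (hx1 : μbar - Δm ≤ x) (hx2 : x ≤ μbar + Δp)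
    (hy1 : μbar - Δm ≤ y) (hy2 : y ≤ μbar + Δp) (hxy : x ≠ y) :
    ∑' q : ℕ × ℕ, ENNReal.ofReal (Hq (Δp + Δm) (nd q.1 q.2)) *
        ENNReal.ofReal (coupleKernel N p μbar Δm Δp x y q.1 q.2) ≤
      ENNReal.ofReal (Hq (Δp + Δm) (nd x y) - 1) := by
  set Δn := Δp + Δm with hΔn
  set aPy := alphaPlus N p μbar Δp y with haPy
  set aMy := alphaMinus N p μbar Δm y with haMy
  set aPx := alphaPlus N p μbar Δp x with haPx
  set aMx := alphaMinus N p μbar Δm x with haMx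
  have haPy0 : 0 ≤ aPy := aplus_nonneg hp0 hp1 hΔp y
  have haMy0 : 0 ≤ aMy := aminus_nonneg hp0 hp1 hΔp y
  have haPx0 : 0 ≤ aPx := aplus_nonneg hp0 hp1 hΔp x
  have haMx0 : 0 ≤ aMx := aminus_nonneg hp0 hp1 hΔp x
  have haPy1 : aPy ≤ 1 := aplus_le_one hp0 hp1 hΔp hA y
  have haMy1 : aMy ≤ 1 := aminus_le_one hp0 hp1 hΔp hB y
  have haPx1 : aPx ≤ 1 := aplus_le_one hp0 hp1 hΔp hA x
  have haMx1 : aMx ≤ 1 := aminus_le_one hp0 hp1 hΔp hB x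
  set cst : ℝ := (1 - aPy) / 4 + (1 - aMy) / 4 + (1 - aPx) / 4 + (1 - aMx) / 4 with hcst
  have hcst0 : 0 ≤ cst := by rw [hcst]; linarith
  set g : ℕ × ℕ → ℝ≥0∞ := fun q => ENNReal.ofReal (Hq Δn (nd q.1 q.2)) with hg
  -- the five pieces of the kernel
  have hker : ∀ q : ℕ × ℕ,
      ENNReal.ofReal (coupleKernel N p μbar Δm Δp x y q.1 q.2) =
        ENNReal.ofReal (if q.1 = x ∧ q.2 = y + 1 then aPy / 4 else 0) +
        ENNReal.ofReal (if q.1 = x ∧ q.2 = y - 1 then aMy / 4 else 0) +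
        ENNReal.ofReal (if q.1 = x + 1 ∧ q.2 = y then aPx / 4 else 0) +
        ENNReal.ofReal (if q.1 = x - 1 ∧ q.2 = y then aMx / 4 else 0) +
        ENNReal.ofReal (if q.1 = x ∧ q.2 = y then cst else 0) := by
    intro q
    have n1 : (0:ℝ) ≤ if q.1 = x ∧ q.2 = y + 1 then aPy / 4 else 0 := ite_nonneg' (by linarith)
    have n2 : (0:ℝ) ≤ if q.1 = x ∧ q.2 = y - 1 then aMy / 4 else 0 := ite_nonneg' (by linarith)
    have n3 : (0:ℝ) ≤ if q.1 = x + 1 ∧ q.2 = y then aPx / 4 else 0 := ite_nonneg' (by linarith)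
    have n4 : (0:ℝ) ≤ if q.1 = x - 1 ∧ q.2 = y then aMx / 4 else 0 := ite_nonneg' (by linarith)
    have n5 : (0:ℝ) ≤ if q.1 = x ∧ q.2 = y then cst else 0 := ite_nonneg' hcst0
    unfold coupleKernel
    rw [← haPy, ← haMy, ← haPx, ← haMx, ← hcst]
    rw [ENNReal.ofReal_add (add_nonneg (add_nonneg (add_nonneg n1 n2) n3) n4) n5,
      ENNReal.ofReal_add (add_nonneg (add_nonneg n1 n2) n3) n4,
      ENNReal.ofReal_add (add_nonneg n1 n2) n3,
      ENNReal.ofReal_add n1 n2]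
  -- single-point tsums
  have single : ∀ (a b : ℕ) (r : ℝ),
      (∑' q : ℕ × ℕ, g q * ENNReal.ofReal (if q.1 = a ∧ q.2 = b then r else 0)) =
        g (a, b) * ENNReal.ofReal r := by
    intro a b r
    rw [tsum_eq_single ((a, b) : ℕ × ℕ)]
    · norm_num
    · intro q hq
      have : ¬(q.1 = a ∧ q.2 = b) := by
        intro hmem
        exact hq (Prod.ext hmem.1 hmem.2)
      rw [if_neg this]
      simp
  calc (∑' q : ℕ × ℕ, g q * ENNReal.ofReal (coupleKernel N p μbar Δm Δp x y q.1 q.2))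
      = (∑' q : ℕ × ℕ, (g q * ENNReal.ofReal (if q.1 = x ∧ q.2 = y + 1 then aPy / 4 else 0) +
          g q * ENNReal.ofReal (if q.1 = x ∧ q.2 = y - 1 then aMy / 4 else 0) +
          g q * ENNReal.ofReal (if q.1 = x + 1 ∧ q.2 = y then aPx / 4 else 0) +
          g q * ENNReal.ofReal (if q.1 = x - 1 ∧ q.2 = y then aMx / 4 else 0) +
          g q * ENNReal.ofReal (if q.1 = x ∧ q.2 = y then cst else 0))) := by
        refine tsum_congr fun q => ?_
        rw [hker q]; ring
    _ = g (x, y+1) * ENNReal.ofReal (aPy / 4) + g (x, y-1) * ENNReal.ofReal (aMy / 4) +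
        g (x+1, y) * ENNReal.ofReal (aPx / 4) + g (x-1, y) * ENNReal.ofReal (aMx / 4) +
        g (x, y) * ENNReal.ofReal cst := by
        rw [ENNReal.tsum_add, ENNReal.tsum_add, ENNReal.tsum_add, ENNReal.tsum_add]
        rw [single, single, single, single, single]
    _ ≤ ENNReal.ofReal (Hq Δn (nd x y) - 1) := by
        have hb1 : 0 ≤ Hq Δn (nd x (y+1)) := Hq_nonneg (by simp only [nd, hΔn]; omega)
        have hb2 : 0 ≤ Hq Δn (nd x (y-1)) := Hq_nonneg (by simp only [nd, hΔn]; omega)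
        have hb3 : 0 ≤ Hq Δn (nd (x+1) y) := Hq_nonneg (by simp only [nd, hΔn]; omega)
        have hb4 : 0 ≤ Hq Δn (nd (x-1) y) := Hq_nonneg (by simp only [nd, hΔn]; omega)
        have hb5 : 0 ≤ Hq Δn (nd x y) := Hq_nonneg (by simp only [nd, hΔn]; omega)
        simp only [hg]
        rw [← ENNReal.ofReal_mul hb1, ← ENNReal.ofReal_mul hb2, ← ENNReal.ofReal_mul hb3,
          ← ENNReal.ofReal_mul hb4, ← ENNReal.ofReal_mul hb5]
        rw [← ENNReal.ofReal_add (by positivity) (by positivity),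
          ← ENNReal.ofReal_add (by positivity) (by positivity),
          ← ENNReal.ofReal_add (by positivity) (by positivity),
          ← ENNReal.ofReal_add (by positivity) (by positivity)]
        apply ENNReal.ofReal_le_ofReal
        have key := kernel_drift hp0 hp1 hΔm hΔp hA hB x y hx1 hx2 hy1 hy2 hxy
        rw [← haPy, ← haMy, ← haPx, ← haMx, ← hΔn] at key
        rw [hcst]
        linarith

end KernelBound


/-- Index type for uncoupled cylinders. -/
def UncIdx (t : ℕ) := {w : Fin (t+1) → ℕ × ℕ // ∀ s, (w s).1 ≠ (w s).2}

instance (t : ℕ) : Countable (UncIdx t) := by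
  unfold UncIdx; infer_instance

lemma measurableSet_eq_fun_nat {Ω : Type*} [MeasurableSpace Ω] {Z W : Ω → ℕ}
    (hZ : Measurable Z) (hW : Measurable W) : MeasurableSet {ω | Z ω = W ω} := by
  have : {ω | Z ω = W ω} = ⋃ n : ℕ, Z ⁻¹' {n} ∩ W ⁻¹' {n} := by
    ext ω
    simp only [Set.mem_setOf_eq, Set.mem_iUnion, Set.mem_inter_iff, Set.mem_preimage,
      Set.mem_singleton_iff]
    exact ⟨fun h => ⟨Z ω, rfl, h.symm⟩, fun ⟨n, h1, h2⟩ => h1.trans h2.symm⟩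
  rw [this]
  exact MeasurableSet.iUnion fun n =>
    (hZ (measurableSet_singleton n)).inter (hW (measurableSet_singleton n))

set_option maxHeartbeats 2000000 in
/-- For the coupling `(X_t, Y_t)` of two copies of the Metropolis chain
on `I = [μ̄ - Δ⁻, μ̄ + Δ⁺]` started at `X_0 = μ̄ + Δ⁺` and `Y_0 = μ̄ - Δ⁻`, the coupling
time `T = min{t : X_t = Y_t}` satisfies `E[T] ≤ 2(Δ⁺ + Δ⁻ + 1)²` (in particular `T` is
a.s. finite). -/
theorem coupling_time_expectation_le
    {Ω : Type*} [MeasurableSpace Ω] (μ : Measure Ω) [IsProbabilityMeasure μ]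
    (N : ℕ) (hN : 1 ≤ N) (p : ℝ) (hp0 : 0 < p) (hp1 : p < 1)
    (μbar Δm Δp : ℕ)
    (hμbar : μbar =
      if (N : ℝ) * p - ⌊(N : ℝ) * p⌋₊ ≤ 1 - p then ⌊(N : ℝ) * p⌋₊ else ⌈(N : ℝ) * p⌉₊)
    (hΔm : Δm ≤ μbar) (hΔp : μbar + Δp ≤ N)
    (X Y : ℕ → Ω → ℕ) (hXmeas : ∀ t, Measurable (X t)) (hYmeas : ∀ t, Measurable (Y t))
    (hrange : ∀ t ω, X t ω ∈ Set.Icc (μbar - Δm) (μbar + Δp) ∧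
      Y t ω ∈ Set.Icc (μbar - Δm) (μbar + Δp))
    (hX0 : ∀ᵐ ω ∂μ, X 0 ω = μbar + Δp) (hY0 : ∀ᵐ ω ∂μ, Y 0 ω = μbar - Δm)
    (hstep : ∀ (t : ℕ) (x y : ℕ → ℕ), x t ≠ y t →
      μ {ω | ∀ s ≤ t, X s ω = x s ∧ Y s ω = y s} ≠ 0 →
      ∀ a b : ℕ,
        μ[|{ω | ∀ s ≤ t, X s ω = x s ∧ Y s ω = y s}]
            {ω | X (t + 1) ω = a ∧ Y (t + 1) ω = b} =
          ENNReal.ofReal (coupleKernel N p μbar Δm Δp (x t) (y t) a b)) :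
    ∫⁻ ω, (⨅ (t : ℕ) (_ : X t ω = Y t ω), (t : ℝ≥0∞)) ∂μ ≤
      ENNReal.ofReal (2 * ((Δp : ℝ) + (Δm : ℝ) + 1) ^ 2) := by
  -- abbreviations
  set lo := μbar - Δm with hlo
  set hi := μbar + Δp with hhi
  set Δn := Δp + Δm with hΔn
  -- basic real facts about μbar
  have hm0 : (0:ℝ) ≤ (N:ℝ) * p := by positivity
  have hAB : ((N:ℝ) * p - 1 + p ≤ μbar) ∧ ((μbar : ℝ) ≤ ((N:ℝ) + 1) * p) := by
    have hfl : (⌊(N:ℝ) * p⌋₊ : ℝ) ≤ (N:ℝ) * p := Nat.floor_le hm0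
    have hfl2 : (N:ℝ) * p < ⌊(N:ℝ) * p⌋₊ + 1 := Nat.lt_floor_add_one _
    by_cases hξ : (N : ℝ) * p - ⌊(N : ℝ) * p⌋₊ ≤ 1 - p
    · rw [if_pos hξ] at hμbar
      have : (μbar : ℝ) = ⌊(N:ℝ) * p⌋₊ := by exact_mod_cast congrArg (Nat.cast (R := ℝ)) hμbar
      constructor <;> [linarith; nlinarith]
    · rw [if_neg hξ] at hμbar
      push_neg at hξ
      have hce : (N:ℝ) * p ≤ ⌈(N:ℝ) * p⌉₊ := Nat.le_ceil _
      have hcf : (⌈(N:ℝ) * p⌉₊ : ℝ) ≤ (⌊(N:ℝ) * p⌋₊ : ℝ) + 1 := by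
        exact_mod_cast Nat.ceil_le_floor_add_one _
      have : (μbar : ℝ) = ⌈(N:ℝ) * p⌉₊ := by exact_mod_cast congrArg (Nat.cast (R := ℝ)) hμbar
      constructor <;> nlinarith
  obtain ⟨hA, hB⟩ := hAB
  -- the "uncoupled up to time t" events
  set U : ℕ → Set Ω := fun t => {ω | ∀ s ≤ t, X s ω ≠ Y s ω} with hU
  have hUmeas : ∀ t, MeasurableSet (U t) := by
    intro t
    have : U t = ⋂ s, ⋂ _ : s ≤ t, {ω | X s ω = Y s ω}ᶜ := by
      ext ω; simp [hU, Set.mem_iInter]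
    rw [this]
    exact MeasurableSet.iInter fun s => MeasurableSet.iInter fun _ =>
      (measurableSet_eq_fun_nat (hXmeas s) (hYmeas s)).compl
  have hUmono : ∀ t, U (t+1) ⊆ U t := fun t ω hω s hs => hω s (le_trans hs (Nat.le_succ t))
  -- the potential process
  set f : ℕ → Ω → ℝ≥0∞ := fun t ω => ENNReal.ofReal (Hq Δn (nd (X t ω) (Y t ω))) with hf
  have hfmeas : ∀ t, Measurable (f t) := by
    intro t
    have : f t = (fun q : ℕ × ℕ => ENNReal.ofReal (Hq Δn (nd q.1 q.2))) ∘
        (fun ω => (X t ω, Y t ω)) := rfl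
    rw [this]
    exact (measurable_of_countable _).comp ((hXmeas t).prodMk (hYmeas t))
  set V : ℕ → ℝ≥0∞ := fun t => ∫⁻ ω in U t, f t ω ∂μ with hV
  -- the key one-step estimate
  have key : ∀ t, μ (U t) + V (t+1) ≤ V t := by
    intro t
    classical
    -- cylinders
    set xf : (Fin (t+1) → ℕ × ℕ) → ℕ → ℕ :=
      fun v s => if h : s < t+1 then (v ⟨s, h⟩).1 else 0 with hxf
    set yf : (Fin (t+1) → ℕ × ℕ) → ℕ → ℕ :=
      fun v s => if h : s < t+1 then (v ⟨s, h⟩).2 else 0 with hyf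
    set C : (Fin (t+1) → ℕ × ℕ) → Set Ω :=
      fun v => {ω | ∀ s ≤ t, X s ω = xf v s ∧ Y s ω = yf v s} with hC
    have hCmeas : ∀ v, MeasurableSet (C v) := by
      intro v
      have : C v = ⋂ s, ⋂ _ : s ≤ t,
          ((X s) ⁻¹' {xf v s} ∩ (Y s) ⁻¹' {yf v s}) := by
        ext ω; simp [hC, Set.mem_iInter, Set.mem_setOf_eq]
      rw [this]
      exact MeasurableSet.iInter fun s => MeasurableSet.iInter fun _ =>
        ((hXmeas s) (measurableSet_singleton _)).inter ((hYmeas s) (measurableSet_singleton _))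
    -- per-cylinder estimate
    have percyl : ∀ v : Fin (t+1) → ℕ × ℕ, (∀ s, (v s).1 ≠ (v s).2) →
        (∫⁻ ω in C v, (f (t+1) ω + 1) ∂μ) ≤ ∫⁻ ω in C v, f t ω ∂μ := by
      intro v hv
      by_cases h0 : μ (C v) = 0
      · rw [Measure.restrict_eq_zero.2 h0]
        simp
      · obtain ⟨ω0, hω0⟩ := nonempty_of_measure_ne_zero h0
        have hX0v : X t ω0 = xf v t := (hω0 t le_rfl).1
        have hY0v : Y t ω0 = yf v t := (hω0 t le_rfl).2
        have hxmem : lo ≤ xf v t ∧ xf v t ≤ hi := by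
          have := (hrange t ω0).1
          rw [hX0v] at this
          exact ⟨this.1, this.2⟩
        have hymem : lo ≤ yf v t ∧ yf v t ≤ hi := by
          have := (hrange t ω0).2
          rw [hY0v] at this
          exact ⟨this.1, this.2⟩
        have hxfv : xf v t = (v ⟨t, Nat.lt_succ_self t⟩).1 := by
          simp [hxf]
        have hyfv : yf v t = (v ⟨t, Nat.lt_succ_self t⟩).2 := by
          simp [hyf]
        have hne : xf v t ≠ yf v t := by
          rw [hxfv, hyfv]; exact hv _
        have hd1 : 1 ≤ nd (xf v t) (yf v t) := by
          rcases Nat.lt_or_ge (xf v t) (yf v t) with h | h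
          · simp only [nd]; omega
          · have := lt_of_le_of_ne h (fun e => hne e.symm)
            simp only [nd]; omega
        have hdΔ : nd (xf v t) (yf v t) ≤ Δn := by
          simp only [nd, hΔn]
          omega
        have hHq1 : 1 ≤ Hq Δn (nd (xf v t) (yf v t)) := Hq_ge_one hd1 hdΔ
        -- right-hand side is constant on the cylinder
        have hconstR : ∫⁻ ω in C v, f t ω ∂μ =
            ENNReal.ofReal (Hq Δn (nd (xf v t) (yf v t))) * μ (C v) := by
          rw [setLIntegral_congr_fun (hCmeas v)
            ((fun ω hω => by
              show f t ω = ENNReal.ofReal (Hq Δn (nd (xf v t) (yf v t)))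
              rw [hf]
              simp only
              rw [(hω t le_rfl).1, (hω t le_rfl).2]))]
          exact setLIntegral_const _ _
        -- conditional expectation step
        have hcond : ∫⁻ ω in C v, f (t+1) ω ∂μ =
            μ (C v) * ∫⁻ ω, f (t+1) ω ∂(μ[|C v]) := by
          rw [ProbabilityTheory.cond, lintegral_smul_measure, smul_eq_mul, ← mul_assoc,
            ENNReal.mul_inv_cancel h0 (measure_ne_top μ (C v)), one_mul]
        have hexp : ∫⁻ ω, f (t+1) ω ∂(μ[|C v]) =
            ∑' q : ℕ × ℕ, ENNReal.ofReal (Hq Δn (nd q.1 q.2)) *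
              (μ[|C v]) {ω | X (t+1) ω = q.1 ∧ Y (t+1) ω = q.2} :=
          lintegral_pair_eq_tsum (μ[|C v]) (X (t+1)) (Y (t+1)) (hXmeas _) (hYmeas _)
            (fun q => ENNReal.ofReal (Hq Δn (nd q.1 q.2)))
        have hsum : (∑' q : ℕ × ℕ, ENNReal.ofReal (Hq Δn (nd q.1 q.2)) *
              (μ[|C v]) {ω | X (t+1) ω = q.1 ∧ Y (t+1) ω = q.2}) =
            ∑' q : ℕ × ℕ, ENNReal.ofReal (Hq Δn (nd q.1 q.2)) *
              ENNReal.ofReal (coupleKernel N p μbar Δm Δp (xf v t) (yf v t) q.1 q.2) := by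
          refine tsum_congr fun q => ?_
          rw [hstep t (xf v) (yf v) hne h0 q.1 q.2]
        have hbound := tsum_kernel_bound hp0 hp1 hΔm hΔp hA hB (xf v t) (yf v t)
          hxmem.1 hxmem.2 hymem.1 hymem.2 hne
        have hintbound : ∫⁻ ω, f (t+1) ω ∂(μ[|C v]) ≤
            ENNReal.ofReal (Hq Δn (nd (xf v t) (yf v t)) - 1) := by
          rw [hexp, hsum]
          exact hbound
        calc ∫⁻ ω in C v, (f (t+1) ω + 1) ∂μ
            = (∫⁻ ω in C v, f (t+1) ω ∂μ) + μ (C v) := by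
              rw [lintegral_add_right _ measurable_const, setLIntegral_one]
          _ ≤ μ (C v) * ENNReal.ofReal (Hq Δn (nd (xf v t) (yf v t)) - 1) + μ (C v) := by
              gcongr
              rw [hcond]
              exact mul_le_mul_right hintbound _
          _ = μ (C v) * (ENNReal.ofReal (Hq Δn (nd (xf v t) (yf v t)) - 1) + 1) := by
              ring
          _ = μ (C v) * ENNReal.ofReal (Hq Δn (nd (xf v t) (yf v t))) := by
              congr 1
              rw [← ENNReal.ofReal_one, ← ENNReal.ofReal_add (by linarith) zero_le_one]
              congr 1
              linarith
          _ = ∫⁻ ω in C v, f t ω ∂μ := by rw [hconstR, mul_comm]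
    -- decompose U t into cylinders
    have hcover : U t = ⋃ w : UncIdx t, C w.1 := by
      ext ω
      constructor
      · intro hω
        refine Set.mem_iUnion.2 ⟨⟨fun s => (X s ω, Y s ω), fun s => hω s (Nat.lt_succ_iff.mp s.isLt)⟩, ?_⟩
        intro s hs
        constructor
        · simp [hC, hxf, Nat.lt_succ_iff.mpr hs]
          exact fun h => absurd h (not_lt.mpr hs)
        · simp [hC, hyf, Nat.lt_succ_iff.mpr hs]
          exact fun h => absurd h (not_lt.mpr hs)
      · intro hω
        obtain ⟨w, hw⟩ := Set.mem_iUnion.1 hω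
        intro s hs
        have h1 := (hw s hs).1
        have h2 := (hw s hs).2
        rw [h1, h2]
        simp only [hxf, hyf, dif_pos (Nat.lt_succ_iff.mpr hs)]
        exact w.2 _
    have hdisj : Pairwise (Function.onFun Disjoint fun w : UncIdx t => C w.1) := by
      intro u w huw
      rw [Function.onFun]
      rw [Set.disjoint_left]
      intro ω hu hw
      apply huw
      apply Subtype.ext
      funext s
      have h1 := hu s.1 (Nat.lt_succ_iff.mp s.isLt)
      have h2 := hw s.1 (Nat.lt_succ_iff.mp s.isLt)
      have e1 : xf u.1 s.1 = (u.1 s).1 := by simp [hxf, s.isLt]; exact fun h => absurd h (not_lt.mpr (Nat.lt_succ_iff.mp s.isLt))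
      have e2 : yf u.1 s.1 = (u.1 s).2 := by simp [hyf, s.isLt]; exact fun h => absurd h (not_lt.mpr (Nat.lt_succ_iff.mp s.isLt))
      have e3 : xf w.1 s.1 = (w.1 s).1 := by simp [hxf, s.isLt]; exact fun h => absurd h (not_lt.mpr (Nat.lt_succ_iff.mp s.isLt))
      have e4 : yf w.1 s.1 = (w.1 s).2 := by simp [hyf, s.isLt]; exact fun h => absurd h (not_lt.mpr (Nat.lt_succ_iff.mp s.isLt))
      apply Prod.ext
      · rw [← e1, ← e3, ← h1.1, ← h2.1]
      · rw [← e2, ← e4, ← h1.2, ← h2.2]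
    -- put everything together
    have hsplit : ∀ g : Ω → ℝ≥0∞, ∫⁻ ω in U t, g ω ∂μ = ∑' w : UncIdx t, ∫⁻ ω in C w.1, g ω ∂μ := by
      intro g
      rw [hcover]
      exact lintegral_iUnion (β := UncIdx t) (s := fun w => C w.1)
        (fun w => hCmeas w.1) hdisj g
    have hstep1 : μ (U t) + V (t+1) ≤ ∫⁻ ω in U t, (f (t+1) ω + 1) ∂μ := by
      rw [lintegral_add_right _ measurable_const, setLIntegral_one]
      rw [add_comm]
      gcongr
      exact lintegral_mono_set (hUmono t)
    calc μ (U t) + V (t+1) ≤ ∫⁻ ω in U t, (f (t+1) ω + 1) ∂μ := hstep1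
      _ = ∑' w : UncIdx t, ∫⁻ ω in C w.1, (f (t+1) ω + 1) ∂μ := hsplit _
      _ ≤ ∑' w : UncIdx t, ∫⁻ ω in C w.1, f t ω ∂μ := Summable.tsum_le_tsum (fun w => percyl w.1 w.2)
          ENNReal.summable ENNReal.summable
      _ = V t := (hsplit _).symm
  -- iterate
  have partial_sum : ∀ n, (∑ t ∈ Finset.range n, μ (U t)) + V n ≤ V 0 := by
    intro n
    induction n with
    | zero => simp
    | succ n ih =>
      rw [Finset.sum_range_succ]
      calc (∑ t ∈ Finset.range n, μ (U t)) + μ (U n) + V (n+1)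
          ≤ (∑ t ∈ Finset.range n, μ (U t)) + V n := by
            rw [add_assoc]
            exact add_le_add le_rfl (key n)
        _ ≤ V 0 := ih
  -- bound on V 0
  have hV0 : V 0 ≤ ENNReal.ofReal (Hq Δn Δn) := by
    have hae : ∀ᵐ ω ∂μ, f 0 ω = ENNReal.ofReal (Hq Δn Δn) := by
      filter_upwards [hX0, hY0] with ω h1 h2
      rw [hf]
      simp only
      rw [h1, h2]
      congr 2
      simp only [nd, hΔn]
      omega
    calc V 0 ≤ ∫⁻ ω, f 0 ω ∂μ := setLIntegral_le_lintegral _ _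
      _ = ∫⁻ _, ENNReal.ofReal (Hq Δn Δn) ∂μ := lintegral_congr_ae hae
      _ = ENNReal.ofReal (Hq Δn Δn) := by rw [lintegral_const, measure_univ, mul_one]
  -- identify the coupling time with the sum of indicators
  have hTid : ∀ ω, (⨅ (t : ℕ) (_ : X t ω = Y t ω), (t : ℝ≥0∞)) =
      ∑' t : ℕ, (U t).indicator (fun _ => (1 : ℝ≥0∞)) ω := by
    intro ω
    by_cases hc : ∃ t, X t ω = Y t ω
    · set m := Nat.find hc with hm
      have hmem : ∀ t : ℕ, ω ∈ U t ↔ t < m := by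
        intro t
        constructor
        · intro hω
          by_contra hlt
          push_neg at hlt
          exact hω m hlt (Nat.find_spec hc)
        · intro hlt s hs
          exact Nat.find_min hc (lt_of_le_of_lt hs hlt)
      have hL : (⨅ (t : ℕ) (_ : X t ω = Y t ω), (t : ℝ≥0∞)) = m := by
        apply le_antisymm
        · rw [hm]
          exact le_trans (iInf_le _ (Nat.find hc)) (iInf_le _ (Nat.find_spec hc))
        · refine le_iInf₂ fun t ht => ?_
          exact_mod_cast Nat.cast_le.2 (Nat.find_min' hc ht)
      rw [hL]
      have : ∀ t : ℕ, (U t).indicator (fun _ => (1 : ℝ≥0∞)) ω = if t < m then 1 else 0 := by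
        intro t
        by_cases h : t < m
        · rw [if_pos h, Set.indicator_of_mem ((hmem t).2 h)]
        · rw [if_neg h, Set.indicator_of_notMem (fun hmem' => h ((hmem t).1 hmem'))]
      rw [tsum_congr this, tsum_eq_sum (s := Finset.range m)
        (fun t ht => if_neg (by simpa using ht))]
      rw [Finset.sum_ite_of_true (fun t ht => by simpa using ht)]
      simp
    · push_neg at hc
      have hL : (⨅ (t : ℕ) (_ : X t ω = Y t ω), (t : ℝ≥0∞)) = ⊤ := by
        rw [iInf_eq_top]
        intro t
        rw [iInf_eq_top]
        intro h
        exact absurd h (hc t)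
      have hR : ∀ t : ℕ, (U t).indicator (fun _ => (1 : ℝ≥0∞)) ω = 1 := by
        intro t
        exact Set.indicator_of_mem (show ω ∈ U t from fun s _ => hc s) _
      rw [hL, tsum_congr hR]
      exact (ENNReal.tsum_const_eq_top_of_ne_zero one_ne_zero).symm
  -- final computation
  calc ∫⁻ ω, (⨅ (t : ℕ) (_ : X t ω = Y t ω), (t : ℝ≥0∞)) ∂μ
      = ∫⁻ ω, ∑' t : ℕ, (U t).indicator (fun _ => (1 : ℝ≥0∞)) ω ∂μ := lintegral_congr hTid
    _ = ∑' t : ℕ, ∫⁻ ω, (U t).indicator (fun _ => (1 : ℝ≥0∞)) ω ∂μ :=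
        lintegral_tsum fun t => (measurable_const.indicator (hUmeas t)).aemeasurable
    _ = ∑' t : ℕ, μ (U t) := by
        refine tsum_congr fun t => ?_
        rw [lintegral_indicator_const (hUmeas t), one_mul]
    _ ≤ V 0 := by
        refine Summable.tsum_le_of_sum_range_le ENNReal.summable fun n => ?_
        exact le_trans le_self_add (partial_sum n)
    _ ≤ ENNReal.ofReal (Hq Δn Δn) := hV0
    _ ≤ ENNReal.ofReal (2 * ((Δp : ℝ) + (Δm : ℝ) + 1) ^ 2) := by
        apply ENNReal.ofReal_le_ofReal
        unfold Hq
        rw [hΔn]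
        push_cast
        nlinarith [sq_nonneg ((Δp:ℝ) + (Δm:ℝ))]
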